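/- Fix ξ ∈ ℂⁿ and let Q be an m_ξ-primary ideal with dim_ℂ ℂ[x]/Q = μ. Let B = {(x−ξ)^{β₁},…,(x−ξ)^{β_μ}} be a monomial basis of ℂ[x]/Q and Λ = {Λ₁,…,Λ_μ} the basis of Q^⊥ dual to B, with ord(Λ_i) = |β_i| for all i. For α ∈ ℕⁿ write μ_{β_i,α} := Λ_i((x−ξ)^α), so that the normal form of (x−ξ)^α modulo Q in the basis B is N((x−ξ)^α) = Σ_i μ_{β_i,α}(x−ξ)^{β_i}. Then for every k = 1,…,n and every i: ∂_{d_k}(Λ_i) = Σ_{j : |β_j| < |β_i|} μ_{β_i, β_j + e_k} Λ_j; in particular, the matrix of the multiplication map by (x_k − ξ_k) on ℂ[x]/Q in the basis B is the transpose of the matrix of ∂_{d_k} on Q^⊥ in the basis Λ, namely [μ_{β_i, β_j + e_k}]_{1≤i,j≤μ}. -/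

import Mathlib

open MvPolynomial

/-- Total degree `|β|` of an exponent vector `β ∈ ℕⁿ`. -/
def mdeg {n : ℕ} (a : Fin n →₀ ℕ) : ℕ := ∑ i, a i

/-- Iterated partial derivative `∂^β p`. -/
noncomputable def pdiff {n : ℕ} (β : Fin n →₀ ℕ) (p : MvPolynomial (Fin n) ℂ) :
    MvPolynomial (Fin n) ℂ :=
  (List.finRange n).foldr (fun i q => (fun r => pderiv i r)^[β i] q) p

/-- The linear functional on `ℂ[x]` attached to the dual polynomial `Λ ∈ ℂ[d_ξ]`:
`Λ(p) = Σ_β coeff_β(Λ) • (∂^β p)(ξ)`. -/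
noncomputable def dapply {n : ℕ} (ξ : Fin n → ℂ) (Λ p : MvPolynomial (Fin n) ℂ) : ℂ :=
  ∑ β ∈ Λ.support, coeff β Λ * eval ξ (pdiff β p)

/-- The shifted monomial `(x-ξ)^β`. -/
noncomputable def xpow {n : ℕ} (ξ : Fin n → ℂ) (β : Fin n →₀ ℕ) : MvPolynomial (Fin n) ℂ :=
  ∏ i, (X i - C (ξ i)) ^ β i

/-- `∫ᵏΛ`: substitute `0` for `d_{k+1},…,d_n` in `Λ` and take the antiderivative with
respect to `d_k` having no constant term. -/
noncomputable def integ {n : ℕ} (k : Fin n) (Λ : MvPolynomial (Fin n) ℂ) :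
    MvPolynomial (Fin n) ℂ :=
  let Λ' := aeval (fun i => if i ≤ k then X i else 0) Λ
  ∑ β ∈ Λ'.support, monomial (β + Finsupp.single k 1) (coeff β Λ' / ((β k : ℂ) + 1))

/-- The maximal ideal `m_ξ` of polynomials vanishing at `ξ`. -/
noncomputable def mIdeal {n : ℕ} (ξ : Fin n → ℂ) : Ideal (MvPolynomial (Fin n) ℂ) :=
  RingHom.ker (eval ξ)

/-- `β! = β₁!⋯βₙ!`. -/
def ffact {n : ℕ} (a : Fin n →₀ ℕ) : ℕ := ∏ i, (a i).factorial


section Helpers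

open Finset

lemma coeff_pderiv {n : ℕ} (k : Fin n) (p : MvPolynomial (Fin n) ℂ) (γ : Fin n →₀ ℕ) :
    coeff γ (pderiv k p) = ((γ k : ℂ) + 1) * coeff (γ + Finsupp.single k 1) p := by
  induction p using MvPolynomial.induction_on' with
  | add p q hp hq => simp only [map_add, coeff_add, hp, hq]; ring
  | monomial s a =>
    rw [pderiv_monomial, coeff_monomial, coeff_monomial]
    by_cases h2 : s = γ + Finsupp.single k 1
    · subst h2
      rw [if_pos (add_tsub_cancel_right _ _), if_pos rfl]
      simp [Finsupp.add_apply, Finsupp.single_apply]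
      ring
    · rw [if_neg h2, mul_zero]
      split_ifs with h1
      · by_cases hsk : s k = 0
        · simp [hsk]
        · exfalso
          apply h2
          rw [← h1, tsub_add_cancel_of_le]
          rwa [Finsupp.single_le_iff, Nat.one_le_iff_ne_zero]
      · rfl

lemma iter_pderiv_smul {n : ℕ} (i : Fin n) (t : ℕ) (c : ℂ) (p : MvPolynomial (Fin n) ℂ) :
    (fun r => pderiv i r)^[t] (c • p) = c • (fun r => pderiv i r)^[t] p := by
  induction t generalizing p with
  | zero => simp only [Function.iterate_zero_apply]
  | succ t ih =>
      rw [Function.iterate_succ_apply, Function.iterate_succ_apply]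
      rw [show pderiv i (c • p) = c • pderiv i p from Derivation.map_smul _ _ _]
      exact ih _

lemma pderiv_fac_ne {n : ℕ} {i j : Fin n} (h : j ≠ i) (c : ℂ) (e : ℕ) :
    pderiv i ((X j - C c) ^ e : MvPolynomial (Fin n) ℂ) = 0 := by
  rw [pderiv_pow]
  simp [map_sub, pderiv_X_of_ne h]

lemma pderiv_prod_zero {n : ℕ} (i : Fin n) (s : Finset (Fin n))
    (f : Fin n → MvPolynomial (Fin n) ℂ) (h : ∀ j ∈ s, pderiv i (f j) = 0) :
    pderiv i (∏ j ∈ s, f j) = 0 := by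
  induction s using Finset.cons_induction with
  | empty => simp
  | cons a s ha ih =>
      rw [Finset.prod_cons, pderiv_mul, h a (Finset.mem_cons_self a s),
        ih (fun j hj => h j (Finset.mem_cons_of_mem hj))]
      ring

lemma iter_pderiv_fac {n : ℕ} (i : Fin n) (c : ℂ) (g : MvPolynomial (Fin n) ℂ)
    (hg : pderiv i g = 0) (t : ℕ) : ∀ m : ℕ,
    (fun r => pderiv i r)^[t] ((X i - C c) ^ m * g)
      = (Nat.descFactorial m t : ℂ) • ((X i - C c) ^ (m - t) * g) := by
  induction t with
  | zero => intro m; simp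
  | succ t ih =>
      intro m
      have hstep : pderiv i ((X i - C c) ^ m * g)
          = (m : ℂ) • ((X i - C c) ^ (m - 1) * g) := by
        rw [pderiv_mul, hg, mul_zero, add_zero, pderiv_pow]
        have h1 : pderiv i (X i - C c) = 1 := by simp [map_sub]
        rw [h1, smul_eq_C_mul, ← C_eq_coe_nat]
        ring
      rw [Function.iterate_succ_apply, hstep, iter_pderiv_smul, ih (m - 1), smul_smul]
      match m with
      | 0 => simp
      | m + 1 =>
          rw [Nat.succ_descFactorial_succ, Nat.add_sub_cancel, Nat.succ_sub_succ]
          push_cast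
          ring_nf

lemma foldr_pdiff_xpow {n : ℕ} (ξ : Fin n → ℂ) (β γ : Fin n →₀ ℕ) :
    ∀ l : List (Fin n), l.Nodup →
    l.foldr (fun i q => (fun r => pderiv i r)^[β i] q) (xpow ξ γ)
      = ((∏ i ∈ l.toFinset, Nat.descFactorial (γ i) (β i) : ℕ) : ℂ) •
        ∏ i, (X i - C (ξ i)) ^ (if i ∈ l then γ i - β i else γ i) := by
  intro l hl
  induction l with
  | nil => simp [xpow]
  | cons a l ih =>
      have ha : a ∉ l := (List.nodup_cons.mp hl).1
      have hnd : l.Nodup := (List.nodup_cons.mp hl).2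
      rw [List.foldr_cons, ih hnd, iter_pderiv_smul]
      set e : Fin n → ℕ := fun i => if i ∈ l then γ i - β i else γ i with he
      have hsplit : (∏ i, (X i - C (ξ i)) ^ e i : MvPolynomial (Fin n) ℂ)
          = (X a - C (ξ a)) ^ (γ a) *
            ∏ i ∈ Finset.univ.erase a, (X i - C (ξ i)) ^ e i := by
        rw [← Finset.mul_prod_erase Finset.univ _ (Finset.mem_univ a)]
        congr 2
        simp [he, ha]
      rw [hsplit, iter_pderiv_fac a (ξ a) _ (pderiv_prod_zero a _ _ (fun j hj =>
        pderiv_fac_ne (Finset.ne_of_mem_erase hj) _ _)) (β a) (γ a), smul_smul]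
      have hcoef : ((∏ i ∈ (a :: l).toFinset, Nat.descFactorial (γ i) (β i) : ℕ) : ℂ)
          = ((∏ i ∈ l.toFinset, Nat.descFactorial (γ i) (β i) : ℕ) : ℂ) *
            (Nat.descFactorial (γ a) (β a) : ℂ) := by
        rw [List.toFinset_cons, Finset.prod_insert (by simpa using ha)]
        push_cast
        ring
      rw [hcoef]
      congr 1
      rw [← Finset.mul_prod_erase Finset.univ
        (fun i => (X i - C (ξ i)) ^ (if i ∈ a :: l then γ i - β i else γ i))
        (Finset.mem_univ a)]
      congr 1
      · simp
      · apply Finset.prod_congr rfl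
        intro j hj
        have : j ≠ a := Finset.ne_of_mem_erase hj
        simp [he, this]

lemma pdiff_xpow {n : ℕ} (ξ : Fin n → ℂ) (β γ : Fin n →₀ ℕ) :
    pdiff β (xpow ξ γ)
      = ((∏ i, Nat.descFactorial (γ i) (β i) : ℕ) : ℂ) •
        ∏ i, (X i - C (ξ i)) ^ (γ i - β i) := by
  rw [pdiff, foldr_pdiff_xpow ξ β γ _ (List.nodup_finRange n)]
  simp [List.mem_finRange, List.toFinset_finRange]

lemma eval_pdiff_xpow {n : ℕ} (ξ : Fin n → ℂ) (β γ : Fin n →₀ ℕ) :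
    eval ξ (pdiff β (xpow ξ γ)) = if β = γ then (ffact γ : ℂ) else 0 := by
  rw [pdiff_xpow, smul_eq_C_mul, map_mul, eval_C, map_prod]
  have hf : ∀ i : Fin n, eval ξ ((X i - C (ξ i)) ^ (γ i - β i) : MvPolynomial (Fin n) ℂ)
      = if γ i - β i = 0 then 1 else 0 := by
    intro i
    rw [map_pow, map_sub, eval_X, eval_C, sub_self, zero_pow_eq]
  simp_rw [hf]
  by_cases h : β = γ
  · subst h
    simp [ffact, Nat.descFactorial_self]
  · rw [if_neg h]
    by_cases hle : ∀ i, β i ≤ γ i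
    · have : ∃ i, β i < γ i := by
        by_contra hc
        push_neg at hc
        exact h (Finsupp.ext fun i => le_antisymm (hle i) (hc i))
      obtain ⟨i, hi⟩ := this
      have hz : (if γ i - β i = 0 then (1:ℂ) else 0) = 0 := by
        rw [if_neg]; omega
      have hp : ∏ j, (if γ j - β j = 0 then (1:ℂ) else 0) = 0 :=
        Finset.prod_eq_zero (Finset.mem_univ i) hz
      rw [hp]
      ring
    · push_neg at hle
      obtain ⟨i, hi⟩ := hle
      have : Nat.descFactorial (γ i) (β i) = 0 := Nat.descFactorial_eq_zero_iff_lt.mpr hi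
      rw [Finset.prod_eq_zero (Finset.mem_univ i) this]
      simp

lemma iter_pderiv_add {n : ℕ} (i : Fin n) (t : ℕ) (p q : MvPolynomial (Fin n) ℂ) :
    (fun r => pderiv i r)^[t] (p + q)
      = (fun r => pderiv i r)^[t] p + (fun r => pderiv i r)^[t] q := by
  induction t generalizing p q with
  | zero => simp only [Function.iterate_zero_apply]
  | succ t ih => rw [Function.iterate_succ_apply, Function.iterate_succ_apply,
      Function.iterate_succ_apply]; simp only [map_add]; exact ih _ _

lemma pdiff_add {n : ℕ} (β : Fin n →₀ ℕ) (p q : MvPolynomial (Fin n) ℂ) :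
    pdiff β (p + q) = pdiff β p + pdiff β q := by
  unfold pdiff
  induction List.finRange n generalizing p q with
  | nil => simp
  | cons a l ih => rw [List.foldr_cons, List.foldr_cons, List.foldr_cons, ih, iter_pderiv_add]

lemma pdiff_smul {n : ℕ} (β : Fin n →₀ ℕ) (c : ℂ) (p : MvPolynomial (Fin n) ℂ) :
    pdiff β (c • p) = c • pdiff β p := by
  unfold pdiff
  induction List.finRange n generalizing p with
  | nil => simp
  | cons a l ih => rw [List.foldr_cons, List.foldr_cons, ih, iter_pderiv_smul]

lemma dapply_add_right {n : ℕ} (ξ : Fin n → ℂ) (Λ p q : MvPolynomial (Fin n) ℂ) :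
    dapply ξ Λ (p + q) = dapply ξ Λ p + dapply ξ Λ q := by
  unfold dapply
  rw [← Finset.sum_add_distrib]
  exact Finset.sum_congr rfl fun β _ => by rw [pdiff_add, map_add]; ring

lemma dapply_smul_right {n : ℕ} (ξ : Fin n → ℂ) (Λ : MvPolynomial (Fin n) ℂ) (c : ℂ)
    (p : MvPolynomial (Fin n) ℂ) : dapply ξ Λ (c • p) = c * dapply ξ Λ p := by
  unfold dapply
  rw [Finset.mul_sum]
  exact Finset.sum_congr rfl fun β _ => by
    rw [pdiff_smul, smul_eq_C_mul, map_mul, eval_C]; ring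

lemma dapply_sum_right {n : ℕ} (ξ : Fin n → ℂ) (Λ : MvPolynomial (Fin n) ℂ)
    {ι : Type*} (s : Finset ι) (f : ι → MvPolynomial (Fin n) ℂ) :
    dapply ξ Λ (∑ j ∈ s, f j) = ∑ j ∈ s, dapply ξ Λ (f j) := by
  induction s using Finset.cons_induction with
  | empty =>
      simp only [Finset.sum_empty]
      unfold dapply
      have hz : ∀ β : Fin n →₀ ℕ, pdiff β (0 : MvPolynomial (Fin n) ℂ) = 0 := fun β => by
        have := pdiff_smul β 0 (0 : MvPolynomial (Fin n) ℂ)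
        simpa using this
      simp [hz]
  | cons a s ha ih => rw [Finset.sum_cons, Finset.sum_cons, dapply_add_right, ih]

lemma dapply_xpow {n : ℕ} (ξ : Fin n → ℂ) (Λ : MvPolynomial (Fin n) ℂ) (γ : Fin n →₀ ℕ) :
    dapply ξ Λ (xpow ξ γ) = coeff γ Λ * (ffact γ : ℂ) := by
  unfold dapply
  rw [Finset.sum_eq_single γ]
  · rw [eval_pdiff_xpow, if_pos rfl]
  · intro β hβ hne
    rw [eval_pdiff_xpow, if_neg hne, mul_zero]
  · intro h
    rw [MvPolynomial.notMem_support_iff.mp h, zero_mul]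

lemma xpow_add_single {n : ℕ} (ξ : Fin n → ℂ) (γ : Fin n →₀ ℕ) (k : Fin n) :
    xpow ξ (γ + Finsupp.single k 1) = (X k - C (ξ k)) * xpow ξ γ := by
  unfold xpow
  have h1 : ∀ i : Fin n, ((X i - C (ξ i) : MvPolynomial (Fin n) ℂ))
        ^ ((γ + Finsupp.single k 1 : Fin n →₀ ℕ) i)
      = (X i - C (ξ i)) ^ (γ i) * (if i = k then X i - C (ξ i) else 1) := by
    intro i
    rw [Finsupp.add_apply, Finsupp.single_apply, pow_add]
    congr 1
    by_cases h : i = k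
    · simp [h]
    · simp [h, Ne.symm h]
  simp_rw [h1]
  rw [Finset.prod_mul_distrib, Finset.prod_ite_eq' Finset.univ k
    (fun i => (X i - C (ξ i) : MvPolynomial (Fin n) ℂ))]
  simp [mul_comm]

lemma ffact_add_single {n : ℕ} (γ : Fin n →₀ ℕ) (k : Fin n) :
    ffact (γ + Finsupp.single k 1) = (γ k + 1) * ffact γ := by
  unfold ffact
  rw [← Finset.mul_prod_erase Finset.univ _ (Finset.mem_univ k),
      ← Finset.mul_prod_erase Finset.univ (fun i => (γ i).factorial) (Finset.mem_univ k)]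
  have h1 : (γ + Finsupp.single k 1 : Fin n →₀ ℕ) k = γ k + 1 := by simp
  rw [h1, Nat.factorial_succ, mul_assoc]
  congr 2
  apply Finset.prod_congr rfl
  intro j hj
  have : j ≠ k := Finset.ne_of_mem_erase hj
  simp [Finsupp.single_apply, Ne.symm this]

lemma mdeg_add_single {n : ℕ} (γ : Fin n →₀ ℕ) (k : Fin n) :
    mdeg (γ + Finsupp.single k 1) = mdeg γ + 1 := by
  unfold mdeg
  simp_rw [Finsupp.add_apply]
  rw [Finset.sum_add_distrib]
  congr 1
  simp [Finsupp.single_apply]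

lemma mdeg_support_sum {n : ℕ} (d : Fin n →₀ ℕ) : ∑ i ∈ d.support, d i = mdeg d :=
  Finset.sum_subset (Finset.subset_univ _) fun x _ hx => Finsupp.notMem_support_iff.mp hx

lemma ffact_ne_zero {n : ℕ} (γ : Fin n →₀ ℕ) : (ffact γ : ℂ) ≠ 0 := by
  rw [Nat.cast_ne_zero]
  unfold ffact
  exact Finset.prod_ne_zero_iff.mpr fun i _ => Nat.factorial_ne_zero _

end Helpers


/-- derivatives of the dual basis elements are given by the coefficients
μ_{β_i,β_j+e_k} = Λ_i((x−ξ)^{β_j+e_k}), and the matrix of multiplication by (x_k−ξ_k)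

on ℂ[x]/Q in the basis B is the transpose of the matrix of ∂_{d_k} in the basis Λ. -/
theorem statement6 {n μ : ℕ} (ξ : Fin n → ℂ) (Q : Ideal (MvPolynomial (Fin n) ℂ))
    (hQ : Q.IsPrimary) (hrad : Q.radical = mIdeal ξ)
    (hμ : μ = Module.finrank ℂ (MvPolynomial (Fin n) ℂ ⧸ Q))
    (β : Fin μ → (Fin n →₀ ℕ))
    (b : Module.Basis (Fin μ) ℂ (MvPolynomial (Fin n) ℂ ⧸ Q))
    (hb : ∀ i, b i = Ideal.Quotient.mk Q (xpow ξ (β i)))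
    (Λ : Fin μ → MvPolynomial (Fin n) ℂ)
    (hvan : ∀ i, ∀ p ∈ Q, dapply ξ (Λ i) p = 0)
    (hdual : ∀ i j, dapply ξ (Λ i) (xpow ξ (β j)) = if i = j then 1 else 0)
    (hord : ∀ i, (Λ i).totalDegree = mdeg (β i)) :
    (∀ (k : Fin n) (i : Fin μ),
      pderiv k (Λ i) =
        ∑ j ∈ Finset.univ.filter (fun j => mdeg (β j) < mdeg (β i)),
          dapply ξ (Λ i) (xpow ξ (β j + Finsupp.single k 1)) • Λ j) ∧
    (∀ (k : Fin n) (j : Fin μ),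
      (X k - C (ξ k)) * xpow ξ (β j) -
        ∑ i, dapply ξ (Λ i) (xpow ξ (β j + Finsupp.single k 1)) • xpow ξ (β i) ∈ Q) := by
  classical
  have hNF : ∀ γ : Fin n →₀ ℕ,
      xpow ξ γ - ∑ i, dapply ξ (Λ i) (xpow ξ γ) • xpow ξ (β i) ∈ Q := by
    intro γ
    set y := Ideal.Quotient.mk Q (xpow ξ γ) with hy
    have hrep : Ideal.Quotient.mk Q (xpow ξ γ)
        = Ideal.Quotient.mk Q (∑ j, (b.repr y) j • xpow ξ (β j)) := by
      have h1 : y = ∑ j, (b.repr y) j • b j := (b.sum_repr y).symm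
      have h2 : ∀ x : MvPolynomial (Fin n) ℂ,
          Ideal.Quotient.mk Q x = Ideal.Quotient.mkₐ ℂ Q x := fun x => rfl
      calc Ideal.Quotient.mk Q (xpow ξ γ) = ∑ j, (b.repr y) j • b j := h1
        _ = Ideal.Quotient.mk Q (∑ j, (b.repr y) j • xpow ξ (β j)) := by
            rw [h2, map_sum]
            apply Finset.sum_congr rfl
            intro j _
            rw [map_smul, ← h2, ← hb j]
    have hq : xpow ξ γ - ∑ j, (b.repr y) j • xpow ξ (β j) ∈ Q :=
      Ideal.Quotient.eq.mp hrep
    have hc : ∀ i, dapply ξ (Λ i) (xpow ξ γ) = (b.repr y) i := by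
      intro i
      have hsplit : xpow ξ γ = (∑ j, (b.repr y) j • xpow ξ (β j))
          + (xpow ξ γ - ∑ j, (b.repr y) j • xpow ξ (β j)) := by ring
      conv_lhs => rw [hsplit]
      rw [dapply_add_right, hvan i _ hq, add_zero, dapply_sum_right]
      simp_rw [dapply_smul_right, hdual i]
      simp
    simp_rw [hc]
    exact hq
  have hmu0 : ∀ (i j : Fin μ) (k : Fin n), ¬ mdeg (β j) < mdeg (β i) →
      dapply ξ (Λ i) (xpow ξ (β j + Finsupp.single k 1)) = 0 := by
    intro i j k h
    rw [dapply_xpow]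
    have hc0 : coeff (β j + Finsupp.single k 1) (Λ i) = 0 := by
      apply coeff_eq_zero_of_totalDegree_lt
      rw [mdeg_support_sum, hord i, mdeg_add_single]
      omega
    rw [hc0, zero_mul]
  have hstar : ∀ (k : Fin n) (i : Fin μ) (γ : Fin n →₀ ℕ),
      dapply ξ (Λ i) (xpow ξ (γ + Finsupp.single k 1))
        = ∑ j ∈ Finset.univ.filter (fun j => mdeg (β j) < mdeg (β i)),
            dapply ξ (Λ i) (xpow ξ (β j + Finsupp.single k 1)) * dapply ξ (Λ j) (xpow ξ γ) := by
    intro k i γ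
    have hdec : xpow ξ (γ + Finsupp.single k 1)
        = (∑ j, dapply ξ (Λ j) (xpow ξ γ) • xpow ξ (β j + Finsupp.single k 1))
          + (X k - C (ξ k)) * (xpow ξ γ - ∑ j, dapply ξ (Λ j) (xpow ξ γ) • xpow ξ (β j)) := by
      simp_rw [xpow_add_single]
      rw [mul_sub, Finset.mul_sum]
      simp_rw [mul_smul_comm]
      ring
    rw [hdec, dapply_add_right, hvan i _ (Q.mul_mem_left _ (hNF γ)), add_zero, dapply_sum_right]
    simp_rw [dapply_smul_right]
    rw [← Finset.sum_filter_add_sum_filter_not Finset.univ (fun j => mdeg (β j) < mdeg (β i))]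
    have h0 : ∑ j ∈ Finset.univ.filter (fun j => ¬ mdeg (β j) < mdeg (β i)),
        dapply ξ (Λ j) (xpow ξ γ) * dapply ξ (Λ i) (xpow ξ (β j + Finsupp.single k 1)) = 0 := by
      apply Finset.sum_eq_zero
      intro j hj
      rw [hmu0 i j k (Finset.mem_filter.mp hj).2, mul_zero]
    rw [h0, add_zero]
    exact Finset.sum_congr rfl fun j _ => mul_comm _ _
  constructor
  · intro k i
    apply MvPolynomial.ext
    intro γ
    apply mul_right_cancel₀ (ffact_ne_zero γ)
    rw [coeff_pderiv]
    have hL : ((γ k : ℂ) + 1) * coeff (γ + Finsupp.single k 1) (Λ i) * (ffact γ : ℂ)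
        = dapply ξ (Λ i) (xpow ξ (γ + Finsupp.single k 1)) := by
      rw [dapply_xpow, ffact_add_single]
      push_cast
      ring
    rw [hL, hstar k i γ, coeff_sum, Finset.sum_mul]
    apply Finset.sum_congr rfl
    intro j _
    rw [coeff_smul, smul_eq_mul, mul_assoc, ← dapply_xpow]
  · intro k j
    rw [← xpow_add_single]
    exact hNF (β j + Finsupp.single k 1)
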